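/- Suppose a > 0 and a nonzero homogeneous polynomial f_n(x,y,z) of degree n over ℂ satisfies -a x² z ∂f_n/∂x + a x² z ∂f_n/∂z = (α₄x² + α₅xy + α₆xz + α₇y² + α₈yz + α₉z²) f_n. Then α₅ = α₇ = α₈ = α₉ = 0, α₄ = N₄·a and α₆ = -N₆·a for some nonnegative integers N₄, N₆. -/

import Mathlib

open MvPolynomial

lemma primeX (i : Fin 3) : Prime (X i : MvPolynomial (Fin 3) ℂ) := by
  have h0 : Prime (X 0 : MvPolynomial (Fin 3) ℂ) := by
    have hX : Prime ((finSuccEquiv ℂ 2) (X 0)) := by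
      rw [finSuccEquiv_X_zero]; exact Polynomial.prime_X
    exact (MulEquiv.prime_iff (finSuccEquiv ℂ 2).toRingEquiv.toMulEquiv).mp hX
  have h := (MulEquiv.prime_iff (p := (X 0 : MvPolynomial (Fin 3) ℂ)) (renameEquiv ℂ (Equiv.swap (0 : Fin 3) i)).toRingEquiv.toMulEquiv).mpr h0
  simpa using h

lemma homogCancel (i : Fin 3) (g : MvPolynomial (Fin 3) ℂ) (n : ℕ)
    (hg : g ≠ 0) (h : (X i * g).IsHomogeneous n) :
    ∃ m, n = m + 1 ∧ g.IsHomogeneous m := by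
  have key : ∀ d : Fin 3 →₀ ℕ, coeff d g ≠ 0 →
      (Finsupp.weight (1 : Fin 3 → ℕ)) d + 1 = n := by
    intro d hd
    have h1 : coeff (Finsupp.single i 1 + d) (X i * g) ≠ 0 := by rwa [coeff_X_mul]
    have h2 := h h1
    rw [map_add] at h2
    have hw : (Finsupp.weight (1 : Fin 3 → ℕ)) (Finsupp.single i 1) = 1 := by
      simp [Finsupp.weight_apply, Finsupp.sum_single_index]
    rw [hw] at h2
    omega
  obtain ⟨d₀, hd₀⟩ := MvPolynomial.ne_zero_iff.mp hg
  refine ⟨Finsupp.weight (1 : Fin 3 → ℕ) d₀, (key d₀ hd₀).symm, ?_⟩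
  intro d hd
  have := key d hd
  have := key d₀ hd₀
  omega

/-- Top-degree constraint in 3D: if a > 0 and a nonzero homogeneous polynomial f(x,y,z)
of degree n satisfies -ax²z∂f/∂x + ax²z∂f/∂z = (α₄x²+α₅xy+α₆xz+α₇y²+α₈yz+α₉z²)f,
then α₅ = α₇ = α₈ = α₉ = 0, α₄ = N₄a and α₆ = -N₆a for nonnegative integers N₄, N₆. -/
theorem stmt_17 (a : ℝ) (ha : 0 < a) (α₄ α₅ α₆ α₇ α₈ α₉ : ℂ) (n : ℕ)
    (f : MvPolynomial (Fin 3) ℂ) (hf : f.IsHomogeneous n) (hne : f ≠ 0)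
    (heq : -(C (a : ℂ)) * X 0 ^ 2 * X 2 * pderiv 0 f
      + C (a : ℂ) * X 0 ^ 2 * X 2 * pderiv 2 f
      = (C α₄ * X 0 ^ 2 + C α₅ * X 0 * X 1 + C α₆ * X 0 * X 2
        + C α₇ * X 1 ^ 2 + C α₈ * X 1 * X 2 + C α₉ * X 2 ^ 2) * f) :
    α₅ = 0 ∧ α₇ = 0 ∧ α₈ = 0 ∧ α₉ = 0 ∧
      (∃ N₄ : ℕ, α₄ = (N₄ : ℂ) * (a : ℂ)) ∧ (∃ N₆ : ℕ, α₆ = -(N₆ : ℂ) * (a : ℂ)) := by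
  induction n using Nat.strong_induction_on generalizing α₄ α₆ f with
  | _ n ih =>
  by_cases h0 : (X 0 : MvPolynomial (Fin 3) ℂ) ∣ f
  · obtain ⟨g, rfl⟩ := h0
    have hg : g ≠ 0 := right_ne_zero_of_mul hne
    obtain ⟨m, rfl, hgm⟩ := homogCancel 0 g n hg hf
    have e0 : pderiv 0 ((X 0 : MvPolynomial (Fin 3) ℂ) * g) = g + X 0 * pderiv 0 g := by
      rw [pderiv_mul, pderiv_X_self, one_mul]
    have e2 : pderiv 2 ((X 0 : MvPolynomial (Fin 3) ℂ) * g) = X 0 * pderiv 2 g := by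
      rw [pderiv_mul, pderiv_X_of_ne (by decide), zero_mul, zero_add]
    rw [e0, e2] at heq
    have heq' : -(C (a : ℂ)) * X 0 ^ 2 * X 2 * pderiv 0 g
        + C (a : ℂ) * X 0 ^ 2 * X 2 * pderiv 2 g
        = (C (α₄) * X 0 ^ 2 + C α₅ * X 0 * X 1 + C (α₆ + (a : ℂ)) * X 0 * X 2
          + C α₇ * X 1 ^ 2 + C α₈ * X 1 * X 2 + C α₉ * X 2 ^ 2) * g := by
      apply mul_left_cancel₀ (X_ne_zero (R := ℂ) (0 : Fin 3))
      rw [C_add]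
      linear_combination heq
    obtain ⟨h5, h7, h8, h9, ⟨N4, h4⟩, ⟨N6, h6⟩⟩ := ih m (by omega) α₄ (α₆ + a) g hgm hg heq'
    refine ⟨h5, h7, h8, h9, ⟨N4, h4⟩, ⟨N6 + 1, ?_⟩⟩
    push_cast
    linear_combination h6
  by_cases h2' : (X 2 : MvPolynomial (Fin 3) ℂ) ∣ f
  · obtain ⟨g, rfl⟩ := h2'
    have hg : g ≠ 0 := right_ne_zero_of_mul hne
    obtain ⟨m, rfl, hgm⟩ := homogCancel 2 g n hg hf
    have e0 : pderiv 0 ((X 2 : MvPolynomial (Fin 3) ℂ) * g) = X 2 * pderiv 0 g := by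
      rw [pderiv_mul, pderiv_X_of_ne (by decide), zero_mul, zero_add]
    have e2 : pderiv 2 ((X 2 : MvPolynomial (Fin 3) ℂ) * g) = g + X 2 * pderiv 2 g := by
      rw [pderiv_mul, pderiv_X_self, one_mul]
    rw [e0, e2] at heq
    have heq' : -(C (a : ℂ)) * X 0 ^ 2 * X 2 * pderiv 0 g
        + C (a : ℂ) * X 0 ^ 2 * X 2 * pderiv 2 g
        = (C (α₄ - (a : ℂ)) * X 0 ^ 2 + C α₅ * X 0 * X 1 + C α₆ * X 0 * X 2
          + C α₇ * X 1 ^ 2 + C α₈ * X 1 * X 2 + C α₉ * X 2 ^ 2) * g := by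
      apply mul_left_cancel₀ (X_ne_zero (R := ℂ) (2 : Fin 3))
      rw [C_sub]
      linear_combination heq
    obtain ⟨h5, h7, h8, h9, ⟨N4, h4⟩, ⟨N6, h6⟩⟩ := ih m (by omega) (α₄ - a) α₆ g hgm hg heq'
    refine ⟨h5, h7, h8, h9, ⟨N4 + 1, ?_⟩, ⟨N6, h6⟩⟩
    push_cast
    linear_combination h4
  · -- neither X0 nor X2 divides f
    set Q : MvPolynomial (Fin 3) ℂ := C α₄ * X 0 ^ 2 + C α₅ * X 0 * X 1 + C α₆ * X 0 * X 2
        + C α₇ * X 1 ^ 2 + C α₈ * X 1 * X 2 + C α₉ * X 2 ^ 2 with hQ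
    -- X 0 divides Q
    have hQf0 : (X 0 : MvPolynomial (Fin 3) ℂ) ∣ Q * f :=
      ⟨X 0 * X 2 * (C (a : ℂ) * pderiv 2 f - C (a : ℂ) * pderiv 0 f), by linear_combination -heq⟩
    have hQ0 : (X 0 : MvPolynomial (Fin 3) ℂ) ∣ Q := by
      rcases (primeX 0).2.2 _ _ hQf0 with h | h
      · exact h
      · exact absurd h h0
    obtain ⟨r, hr⟩ := hQ0
    have hq0 : C α₇ * X 1 ^ 2 + C α₈ * X 1 * X 2 + C α₉ * X 2 ^ 2
        = X 0 * (r - (C α₄ * X 0 + C α₅ * X 1 + C α₆ * X 2)) := by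
      rw [hQ] at hr; linear_combination hr
    have h7 : α₇ = 0 := by
      have := congrArg (eval ![0, 1, 0]) hq0
      simpa using this
    have h9 : α₉ = 0 := by
      have := congrArg (eval ![0, 0, 1]) hq0
      simpa using this
    have h8 : α₈ = 0 := by
      have h' := congrArg (eval ![0, 1, 1]) hq0
      simp [h7, h9] at h'
      simpa using h'
    -- X 2 divides Q
    have hQf2 : (X 2 : MvPolynomial (Fin 3) ℂ) ∣ Q * f :=
      ⟨X 0 ^ 2 * (C (a : ℂ) * pderiv 2 f - C (a : ℂ) * pderiv 0 f), by linear_combination -heq⟩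
    have hQ2 : (X 2 : MvPolynomial (Fin 3) ℂ) ∣ Q := by
      rcases (primeX 2).2.2 _ _ hQf2 with h | h
      · exact h
      · exact absurd h h2'
    obtain ⟨s, hs⟩ := hQ2
    have hq2 : C α₄ * X 0 ^ 2 + C α₅ * X 0 * X 1 + C α₇ * X 1 ^ 2
        = X 2 * (s - (C α₆ * X 0 + C α₈ * X 1 + C α₉ * X 2)) := by
      rw [hQ] at hs; linear_combination hs
    have h4 : α₄ = 0 := by
      have := congrArg (eval ![1, 0, 0]) hq2
      simpa using this
    have h5 : α₅ = 0 := by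
      have h' := congrArg (eval ![1, 1, 0]) hq2
      simp [h4, h7] at h'
      simpa using h'
    -- remaining equation
    rw [hQ, h4, h5, h7, h8, h9] at heq
    simp only [map_zero, zero_mul, add_zero, zero_add, mul_zero] at heq
    have hc : X 0 * (X 2 * (C (a : ℂ) * X 0 * (pderiv 2 f - pderiv 0 f)))
        = X 0 * (X 2 * (C α₆ * f)) := by
      linear_combination heq
    have hc2 := mul_left_cancel₀ (X_ne_zero (R := ℂ) (2 : Fin 3))
      (mul_left_cancel₀ (X_ne_zero (R := ℂ) (0 : Fin 3)) hc)
    have hdvd : (X 0 : MvPolynomial (Fin 3) ℂ) ∣ C α₆ * f :=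
      ⟨C (a : ℂ) * (pderiv 2 f - pderiv 0 f), by linear_combination -hc2⟩
    have h6 : α₆ = 0 := by
      rcases (primeX 0).2.2 _ _ hdvd with h | h
      · obtain ⟨t, ht⟩ := h
        have := congrArg (eval ![0, 0, 0]) ht
        simpa using this
      · exact absurd h h0
    exact ⟨h5, h7, h8, h9, ⟨0, by simp [h4]⟩, ⟨0, by simp [h6]⟩⟩
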